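/- Let Y be a free abelian group containing the coroot lattice, with Q^∨_+ the submonoid generated by the finitely many simple coroots α_i^∨ (which are ℤ-linearly independent in Y). For any subset A ⊆ Y and any y ∈ Y, the intersection A ∩ (y − Q^∨_+) is contained in a finite union ∪_{i=1}^m (a_i − Q^∨_+) with a_i ∈ A. -/

import Mathlib

/-- Hébert's lemma. Let `Y` be a finitely generated free abelian group and
`Q^∨_+` the submonoid of non-negative integral combinations of a finite `ℤ`-linearly
independent family `coroot`.  For any subset `A ⊆ Y` and any `y ∈ Y`, the intersection
`A ∩ (y − Q^∨_+)` is contained in a finite union of sets `a − Q^∨_+` with `a ∈ A`. -/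
theorem inter_sub_corootCone_subset_finite_union
    {Y : Type} [AddCommGroup Y] [Module.Free ℤ Y] [Module.Finite ℤ Y]
    {I : Type} [Fintype I] (coroot : I → Y)
    (hli : LinearIndependent ℤ coroot)
    (A : Set Y) (y : Y) :
    ∃ F : Finset Y, ↑F ⊆ A ∧
      A ∩ {x : Y | ∃ c : I → ℕ, x = y - ∑ i, c i • coroot i}
        ⊆ ⋃ a ∈ F, {x : Y | ∃ c : I → ℕ, x = a - ∑ i, c i • coroot i} := by
  classical
  set S : Set (I → ℕ) := {c | y - ∑ i, c i • coroot i ∈ A} with hS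
  set M : Set (I → ℕ) := {c | c ∈ S ∧ ∀ c' ∈ S, c' ≤ c → c' = c} with hM
  have hanti : IsAntichain (· ≤ ·) M := by
    intro a ha b hb hab hle
    exact hab (hb.2 a ha.1 hle)
  have hMfin : M.Finite :=
    hanti.finite_of_partiallyWellOrderedOn
      (Set.isPWO_of_wellQuasiOrderedLE M)
  refine ⟨hMfin.toFinset.image (fun c => y - ∑ i, c i • coroot i), ?_, ?_⟩
  · intro a ha
    simp only [Finset.coe_image, Set.mem_image, Set.Finite.coe_toFinset] at ha
    obtain ⟨c, hc, rfl⟩ := ha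
    exact hc.1
  · rintro x ⟨hxA, c, rfl⟩
    have hcS : c ∈ S := hxA
    -- find a minimal element below c
    set T : Set (I → ℕ) := {c' | c' ∈ S ∧ c' ≤ c} with hT
    have hTne : T.Nonempty := ⟨c, hcS, le_rfl⟩
    have hTwf : T.IsWF :=
      (Set.isPWO_of_wellQuasiOrderedLE T).isWF
    set m := hTwf.min hTne with hm
    have hmT : m ∈ T := hTwf.min_mem hTne
    have hmM : m ∈ M := by
      refine ⟨hmT.1, fun c' hc' hle => ?_⟩
      have hc'T : c' ∈ T := ⟨hc', hle.trans hmT.2⟩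
      have hnlt := hTwf.not_lt_min hTne hc'T
      rcases hle.lt_or_eq with h | h
      · exact absurd h hnlt
      · exact h
    have hmc : m ≤ c := hmT.2
    have hsum : ∑ i, c i • coroot i
        = (∑ i, m i • coroot i) + ∑ i, (c i - m i) • coroot i := by
      rw [← Finset.sum_add_distrib]
      refine Finset.sum_congr rfl fun i _ => ?_
      rw [← add_smul, Nat.add_sub_cancel' (hmc i)]
    refine Set.mem_iUnion₂.mpr ⟨y - ∑ i, m i • coroot i, ?_, ?_⟩
    · simp only [Finset.mem_image, Set.Finite.mem_toFinset]
      exact ⟨m, hmM, rfl⟩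
    · exact ⟨fun i => c i - m i, by rw [hsum, sub_add_eq_sub_sub]⟩
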